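/- Let a < 0, k > 0, x₁, x₂ ∈ ℝ. With μ₁, μ̂₁, Σ₁₁, Σ̂₁ as in the coupled identical-oscillator model and its reduction, there exists C > 0 such that for all t ≥ 0, (μ₁(t) − μ̂₁(t))² + |Σ₁₁(t) − Σ̂₁(t)| ≤ C·e^{2at}; hence the Wasserstein distance between the original and reduced laws is at most sqrt(C)·e^{at}. -/

import Mathlib

set_option maxHeartbeats 800000


theorem coupled_wasserstein_longtime (a k x₁ x₂ : ℝ) (ha : a < 0) (hk : k > 0) :
    let μ₁ : ℝ → ℝ := fun t =>
      (1/2)*((Real.exp ((a - 2*k)*t) + Real.exp (a*t))*x₁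
        + (Real.exp (a*t) - Real.exp ((a - 2*k)*t))*x₂)
    let μhat : ℝ → ℝ := fun t => Real.exp (a*t)*x₁
    let S11 : ℝ → ℝ := fun t =>
      (1/2)*((Real.exp (2*(a - 2*k)*t) - 1)/(a - 2*k) + (Real.exp (2*a*t) - 1)/a)
    let Shat : ℝ → ℝ := fun t => -(1/2)*(1/(a - 2*k) + 1/a)*(1 - Real.exp (2*a*t))
    ∃ C > 0, ∀ t : ℝ, t ≥ 0 →
      (μ₁ t - μhat t)^2 + |S11 t - Shat t| ≤ C*Real.exp (2*a*t) ∧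
      Real.sqrt ((μ₁ t - μhat t)^2 + (Real.sqrt (S11 t) - Real.sqrt (Shat t))^2) ≤
        Real.sqrt C * Real.exp (a*t) := by
  intro μ₁ μhat S11 Shat
  have hak : a - 2*k < 0 := by linarith
  have hak0 : a - 2*k ≠ 0 := ne_of_lt hak
  have ha0 : a ≠ 0 := ne_of_lt ha
  have h2ka : (0:ℝ) < 2*(2*k - a) := by linarith
  refine ⟨(x₁ - x₂)^2/4 + 1/(2*(2*k - a)),
    add_pos_of_nonneg_of_pos (by positivity) (by positivity), fun t ht => ?_⟩
  set E := Real.exp ((a - 2*k)*t) with hEdef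
  set F := Real.exp (a*t) with hFdef
  have hEpos : 0 < E := Real.exp_pos _
  have hFpos : 0 < F := Real.exp_pos _
  have hEF : E ≤ F := Real.exp_le_exp.mpr (by nlinarith)
  have hF1 : F ≤ 1 := Real.exp_le_one_iff.mpr (by nlinarith)
  have hE2 : Real.exp (2*(a - 2*k)*t) = E^2 := by
    rw [show 2*(a - 2*k)*t = (a - 2*k)*t + (a - 2*k)*t by ring, Real.exp_add]; ring
  have hF2 : Real.exp (2*a*t) = F^2 := by
    rw [show 2*a*t = a*t + a*t by ring, Real.exp_add]; ring
  have hm : μ₁ t - μhat t = (E - F)*(x₁ - x₂)/2 := by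
    simp only [μ₁, μhat]; ring
  have hmsq : (μ₁ t - μhat t)^2 ≤ (x₁ - x₂)^2/4 * F^2 := by
    rw [hm]; nlinarith [sq_nonneg (x₁ - x₂), sq_nonneg ((F - E)*(x₁ - x₂)),
      mul_le_mul_of_nonneg_right (show (F - E)^2 ≤ F^2 by nlinarith) (sq_nonneg (x₁ - x₂))]
  have hSdiff : S11 t - Shat t = (F^2 - E^2)/(2*(2*k - a)) := by
    simp only [S11, Shat, hE2, hF2]
    rw [eq_div_iff (ne_of_gt h2ka)]
    field_simp
    ring
  have hSd_nonneg : 0 ≤ S11 t - Shat t := by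
    rw [hSdiff]
    apply div_nonneg _ (le_of_lt h2ka)
    nlinarith
  have hSd_le : S11 t - Shat t ≤ 1/(2*(2*k - a)) * F^2 := by
    rw [hSdiff, show (1:ℝ)/(2*(2*k - a))*F^2 = F^2/(2*(2*k - a)) by ring]
    exact div_le_div₀ (by positivity) (by nlinarith) h2ka le_rfl
  have key1 : (μ₁ t - μhat t)^2 + |S11 t - Shat t| ≤
      ((x₁ - x₂)^2/4 + 1/(2*(2*k - a))) * Real.exp (2*a*t) := by
    rw [abs_of_nonneg hSd_nonneg, hF2]
    nlinarith
  refine ⟨key1, ?_⟩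
  -- nonnegativity of variances
  have hia : 1/a < 0 := one_div_neg.mpr ha
  have hiak : 1/(a - 2*k) < 0 := one_div_neg.mpr hak
  have hShat_nn : 0 ≤ Shat t := by
    simp only [Shat, hF2]
    nlinarith [mul_nonneg (show (0:ℝ) ≤ -(1/(a - 2*k) + 1/a) by linarith)
      (show (0:ℝ) ≤ 1 - F^2 by nlinarith)]
  have hS11_nn : 0 ≤ S11 t := by
    simp only [S11, hE2, hF2]
    have h1 : 0 ≤ (E^2 - 1)/(a - 2*k) := div_nonneg_iff.mpr (Or.inr ⟨by nlinarith, le_of_lt hak⟩)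
    have h2 : 0 ≤ (F^2 - 1)/a := div_nonneg_iff.mpr (Or.inr ⟨by nlinarith, le_of_lt ha⟩)
    linarith
  clear_value μ₁ μhat S11 Shat
  have hsq : (Real.sqrt (S11 t) - Real.sqrt (Shat t))^2 ≤ S11 t - Shat t := by
    have hu := Real.sq_sqrt hS11_nn
    have hv := Real.sq_sqrt hShat_nn
    have hle : Real.sqrt (Shat t) ≤ Real.sqrt (S11 t) :=
      Real.sqrt_le_sqrt (by linarith)
    have hvn := Real.sqrt_nonneg (Shat t)
    nlinarith [mul_le_mul_of_nonneg_left hle hvn]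
  have hmono : (μ₁ t - μhat t)^2 + (Real.sqrt (S11 t) - Real.sqrt (Shat t))^2 ≤
      ((x₁ - x₂)^2/4 + 1/(2*(2*k - a))) * Real.exp (2*a*t) := by
    have : (μ₁ t - μhat t)^2 + (Real.sqrt (S11 t) - Real.sqrt (Shat t))^2 ≤
        (μ₁ t - μhat t)^2 + |S11 t - Shat t| := by
      rw [abs_of_nonneg hSd_nonneg]; linarith
    linarith
  calc Real.sqrt ((μ₁ t - μhat t)^2 + (Real.sqrt (S11 t) - Real.sqrt (Shat t))^2)
      ≤ Real.sqrt (((x₁ - x₂)^2/4 + 1/(2*(2*k - a))) * Real.exp (2*a*t)) :=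
        Real.sqrt_le_sqrt hmono
    _ = Real.sqrt ((x₁ - x₂)^2/4 + 1/(2*(2*k - a))) * Real.exp (a*t) := by
        rw [Real.sqrt_mul (by positivity), hF2, Real.sqrt_sq (le_of_lt hFpos)]
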